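/- For each pair 1 ≤ i < j ≤ 5 let L_{ij} = span(eᵢ, eⱼ) ⊂ ℂ⁵, where e₁,…,e₅ is the standard basis. Then e₃ vanishes identically on each L_{ij}, so each projective line ℙ(L_{ij}) is contained in Y₁; the ten lines ℙ(L_{ij}) are pairwise distinct and form a single orbit under the 𝔄₅-action; each line ℙ(L_{ij}) contains exactly two singular points of Y₁, namely [eᵢ] and [eⱼ]; and conversely, every line in ℙ⁴ passing through two distinct singular points of Y₁ is one of the lines ℙ(L_{ij}). -/

import Mathlib

open Projectivization MvPolynomial

noncomputable section
set_option linter.unnecessarySeqFocus false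

/-- ℂ⁵ -/
abbrev V5 : Type := Fin 5 → ℂ

/-- ℙ⁴ = ℙ(ℂ⁵) -/
abbrev P4 : Type := Projectivization ℂ V5

/-- The linear automorphism of ℂ⁵ induced by a permutation of the coordinates. -/
def permLin (σ : Equiv.Perm (Fin 5)) : V5 ≃ₗ[ℂ] V5 :=
  LinearEquiv.funCongrLeft ℂ ℂ σ

/-- The induced map on ℙ⁴ of a linear automorphism of ℂ⁵. -/
def projMap (γ : V5 ≃ₗ[ℂ] V5) : P4 → P4 :=
  Projectivization.map γ.toLinearMap γ.injective

/-- The 𝔄₅-orbit of a point of ℙ⁴, for the action by even permutations of coordinates. -/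
def A5orbit (p : P4) : Set P4 :=
  { q | ∃ σ ∈ alternatingGroup (Fin 5), q = projMap (permLin σ) p }

/-- The third elementary symmetric function e₃ = Σ_{i<j<k} xᵢxⱼx_k on ℂ⁵. -/
def E3 (v : V5) : ℂ := ∑ s ∈ (Finset.univ : Finset (Fin 5)).powersetCard 3, ∏ i ∈ s, v i

/-- The cubic threefold Y₁ = {e₃ = 0} ⊂ ℙ⁴. -/
def Y1 : Set P4 :=
  { p | ∃ (v : V5) (hv : v ≠ 0), p = Projectivization.mk ℂ v hv ∧ E3 v = 0 }

lemma single_one_ne_zero (i : Fin 5) : (Pi.single i 1 : V5) ≠ 0 := by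
  intro h
  have := congrFun h i
  simp at this

/-- The 2-plane L_{ij} = span(eᵢ, eⱼ) ⊂ ℂ⁵. -/
def Lij (i j : Fin 5) : Submodule ℂ V5 :=
  Submodule.span ℂ {Pi.single i 1, Pi.single j 1}

/-- The points of the projective line ℙ(L_{ij}) ⊂ ℙ⁴. -/
def lineSet (i j : Fin 5) : Set P4 :=
  { p | ∃ (v : V5) (hv : v ≠ 0), p = Projectivization.mk ℂ v hv ∧ v ∈ Lij i j }

/-- The singular locus of Y₁: the five coordinate points of ℙ⁴. -/
def SingY1 : Set P4 :=
  { p | ∃ i : Fin 5, p = Projectivization.mk ℂ (Pi.single i 1) (single_one_ne_zero i) }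

lemma mem_Lij_iff {i j : Fin 5} {v : V5} :
    v ∈ Lij i j ↔ ∃ a b : ℂ, a • (Pi.single i 1 : V5) + b • (Pi.single j 1 : V5) = v :=
  Submodule.mem_span_pair

lemma apply_eq_zero_of_mem_Lij {i j k : Fin 5} (hki : k ≠ i) (hkj : k ≠ j) {v : V5}
    (hv : v ∈ Lij i j) : v k = 0 := by
  obtain ⟨a, b, h⟩ := mem_Lij_iff.mp hv
  rw [← h]
  simp [Pi.single_apply, hki, hkj]

lemma E3_zero_of_mem {i j : Fin 5} (hij : i ≠ j) {v : V5} (hv : v ∈ Lij i j) : E3 v = 0 := by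
  unfold E3
  apply Finset.sum_eq_zero
  intro s hs
  simp only [Finset.mem_powersetCard] at hs
  have hk : ∃ k ∈ s, k ≠ i ∧ k ≠ j := by
    by_contra h
    push_neg at h
    have hsub : s ⊆ {i, j} := by
      intro k hk
      rcases eq_or_ne k i with h1 | h1
      · simp [h1]
      · simp [h k hk h1]
    have h2 := Finset.card_le_card hsub
    rw [Finset.card_pair hij, hs.2] at h2
    omega
  obtain ⟨k, hk, hki, hkj⟩ := hk
  exact Finset.prod_eq_zero hk (apply_eq_zero_of_mem_Lij hki hkj hv)

lemma single_mem_Lij (i j : Fin 5) : (Pi.single i 1 : V5) ∈ Lij i j :=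
  Submodule.subset_span (Set.mem_insert _ _)

lemma single_mem_Lij' (i j : Fin 5) : (Pi.single j 1 : V5) ∈ Lij i j :=
  Submodule.subset_span (Set.mem_insert_of_mem _ rfl)

lemma single_mem_Lij_iff {i j k : Fin 5} (hij : i ≠ j) :
    (Pi.single k 1 : V5) ∈ Lij i j ↔ k = i ∨ k = j := by
  constructor
  · intro h
    by_contra hc
    push_neg at hc
    have := apply_eq_zero_of_mem_Lij hc.1 hc.2 h
    simp at this
  · rintro (rfl | rfl)
    · exact single_mem_Lij _ _
    · exact single_mem_Lij' _ _

lemma Lij_comm (i j : Fin 5) : Lij i j = Lij j i := by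
  unfold Lij; rw [Set.pair_comm]

lemma Lij_eq_iff {i j k l : Fin 5} (hij : i ≠ j) (hkl : k ≠ l) (h : Lij i j = Lij k l) :
    (i = k ∧ j = l) ∨ (i = l ∧ j = k) := by
  have hi := (single_mem_Lij_iff hkl).mp (h ▸ single_mem_Lij i j)
  have hj := (single_mem_Lij_iff hkl).mp (h ▸ single_mem_Lij' i j)
  rcases hi with rfl | rfl <;> rcases hj with rfl | rfl <;> tauto

lemma permLin_single (σ : Equiv.Perm (Fin 5)) (i : Fin 5) :
    permLin σ (Pi.single i 1) = (Pi.single (σ⁻¹ i) 1 : V5) := by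
  funext k
  have : (permLin σ (Pi.single i 1) : V5) k = (Pi.single i 1 : V5) (σ k) := rfl
  rw [this]
  simp only [Pi.single_apply]
  congr 1
  simp [eq_iff_iff, ← Equiv.Perm.eq_inv_iff_eq]

lemma map_Lij (σ : Equiv.Perm (Fin 5)) (a b : Fin 5) :
    (Lij a b).map (permLin σ).toLinearMap = Lij (σ⁻¹ a) (σ⁻¹ b) := by
  unfold Lij
  rw [Submodule.map_span, Set.image_pair]
  have h1 : (permLin σ).toLinearMap (Pi.single a 1) = (Pi.single (σ⁻¹ a) 1 : V5) :=
    permLin_single σ a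
  have h2 : (permLin σ).toLinearMap (Pi.single b 1) = (Pi.single (σ⁻¹ b) 1 : V5) :=
    permLin_single σ b
  rw [h1, h2]

lemma exists_even_perm {i j : Fin 5} (hij : i ≠ j) :
    ∃ σ ∈ alternatingGroup (Fin 5), σ i = 0 ∧ σ j = 1 := by
  set τ1 := Equiv.swap i 0 with hτ1
  have hj'0 : τ1 j ≠ 0 := by
    intro h
    apply hij
    have : τ1 j = τ1 i := by rw [h, hτ1, Equiv.swap_apply_left]
    exact (τ1.injective this).symm
  set τ2 := Equiv.swap (τ1 j) 1 with hτ2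
  set σ0 := τ2 * τ1 with hσ0
  have hσ0i : σ0 i = 0 := by
    show τ2 (τ1 i) = 0
    rw [hτ1, Equiv.swap_apply_left, hτ2]
    exact Equiv.swap_apply_of_ne_of_ne (Ne.symm hj'0) (by decide)
  have hσ0j : σ0 j = 1 := by
    show τ2 (τ1 j) = 1
    rw [hτ2, Equiv.swap_apply_left]
  by_cases hA : σ0 ∈ alternatingGroup (Fin 5)
  · exact ⟨σ0, hA, hσ0i, hσ0j⟩
  · refine ⟨Equiv.swap 2 3 * σ0, ?_, ?_, ?_⟩
    · rw [Equiv.Perm.mem_alternatingGroup] at *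
      rw [map_mul]
      rcases Int.units_eq_one_or (Equiv.Perm.sign σ0) with h | h
      · exact absurd h hA
      · rw [h, Equiv.Perm.sign_swap (by decide)]
        decide
    · show Equiv.swap 2 3 (σ0 i) = 0
      rw [hσ0i]
      exact Equiv.swap_apply_of_ne_of_ne (by decide) (by decide)
    · show Equiv.swap 2 3 (σ0 j) = 1
      rw [hσ0j]
      exact Equiv.swap_apply_of_ne_of_ne (by decide) (by decide)

lemma linIndep_singles {i j : Fin 5} (hij : i ≠ j) :
    LinearIndependent ℂ ![(Pi.single i 1 : V5), Pi.single j 1] := by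
  rw [LinearIndependent.pair_iff]
  intro s t h
  constructor
  · have := congrFun h i
    simpa [Pi.single_apply, hij, Ne.symm hij] using this
  · have := congrFun h j
    simpa [Pi.single_apply, hij, Ne.symm hij] using this

lemma finrank_Lij {i j : Fin 5} (hij : i ≠ j) : Module.finrank ℂ (Lij i j) = 2 := by
  have h := finrank_span_eq_card (linIndep_singles hij)
  have hr : Set.range ![(Pi.single i 1 : V5), Pi.single j 1]
      = {Pi.single i 1, Pi.single j 1} := by
    simp [Matrix.range_cons, Matrix.range_empty, Set.pair_comm]
  rw [hr] at h
  exact h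

/-- The ten lines of Y₁ through pairs of singular points. -/
theorem statement8 :
    (∀ i j : Fin 5, i ≠ j → ∀ v ∈ Lij i j, E3 v = 0) ∧
    (∀ i j : Fin 5, i ≠ j → lineSet i j ⊆ Y1) ∧
    { M : Submodule ℂ V5 | ∃ i j : Fin 5, i ≠ j ∧ M = Lij i j }.ncard = 10 ∧
    { M : Submodule ℂ V5 | ∃ i j : Fin 5, i ≠ j ∧ M = Lij i j } =
      { M : Submodule ℂ V5 | ∃ σ ∈ alternatingGroup (Fin 5),
          M = (Lij 0 1).map (permLin σ).toLinearMap } ∧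
    (∀ i j : Fin 5, i ≠ j →
      Projectivization.mk ℂ (Pi.single i 1) (single_one_ne_zero i) ≠
        Projectivization.mk ℂ (Pi.single j 1) (single_one_ne_zero j) ∧
      lineSet i j ∩ SingY1 =
        {Projectivization.mk ℂ (Pi.single i 1) (single_one_ne_zero i),
         Projectivization.mk ℂ (Pi.single j 1) (single_one_ne_zero j)}) ∧
    (∀ W : Submodule ℂ V5, Module.finrank ℂ W = 2 →
      ∀ i j : Fin 5, i ≠ j →
        (Pi.single i 1 : V5) ∈ W → (Pi.single j 1 : V5) ∈ W → W = Lij i j) := by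
  classical
  refine ⟨fun i j hij v hv => E3_zero_of_mem hij hv, ?_, ?_, ?_, ?_, ?_⟩
  · -- lines contained in Y1
    rintro i j hij p ⟨v, hv, rfl, hmem⟩
    exact ⟨v, hv, rfl, E3_zero_of_mem hij hmem⟩
  · -- ncard = 10
    have hset : { M : Submodule ℂ V5 | ∃ i j : Fin 5, i ≠ j ∧ M = Lij i j } =
        ↑(((Finset.univ : Finset (Fin 5 × Fin 5)).filter (fun p => p.1 < p.2)).image
          (fun p => Lij p.1 p.2)) := by
      ext M
      simp only [Set.mem_setOf_eq, Finset.coe_image, Set.mem_image, Finset.mem_coe,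
        Finset.mem_filter, Finset.mem_univ, true_and]
      constructor
      · rintro ⟨i, j, hij, rfl⟩
        rcases hij.lt_or_gt with h | h
        · exact ⟨(i, j), h, rfl⟩
        · exact ⟨(j, i), h, (Lij_comm i j).symm⟩
      · rintro ⟨⟨i, j⟩, h, rfl⟩
        exact ⟨i, j, ne_of_lt h, rfl⟩
    rw [hset, Set.ncard_coe_finset, Finset.card_image_of_injOn, ]
    · decide
    · rintro ⟨i, j⟩ hij ⟨k, l⟩ hkl h
      simp only [Finset.coe_filter, Finset.mem_univ, true_and, Set.mem_setOf_eq] at hij hkl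
      rcases Lij_eq_iff (ne_of_lt hij) (ne_of_lt hkl) h with ⟨rfl, rfl⟩ | ⟨rfl, rfl⟩
      · rfl
      · exact absurd hkl (lt_asymm hij)
  · -- single orbit
    ext M
    simp only [Set.mem_setOf_eq]
    constructor
    · rintro ⟨i, j, hij, rfl⟩
      obtain ⟨σ, hσA, hσi, hσj⟩ := exists_even_perm hij
      refine ⟨σ, hσA, ?_⟩
      rw [map_Lij]
      have h1 : σ⁻¹ 0 = i := by rw [← hσi]; exact Equiv.symm_apply_apply σ i
      have h2 : σ⁻¹ 1 = j := by rw [← hσj]; exact Equiv.symm_apply_apply σ j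
      rw [h1, h2]
    · rintro ⟨σ, hσA, rfl⟩
      refine ⟨σ⁻¹ 0, σ⁻¹ 1, fun h => ?_, (map_Lij σ 0 1)⟩
      have := (σ⁻¹).injective h
      exact absurd this (by decide)
  · -- intersection with singular locus
    intro i j hij
    constructor
    · intro h
      rw [Projectivization.mk_eq_mk_iff] at h
      obtain ⟨a, ha⟩ := h
      have := congrFun ha i
      simp [Pi.single_apply, hij, Ne.symm hij] at this
    · ext p
      constructor
      · rintro ⟨⟨v, hv, rfl, hmem⟩, k, hk⟩
        rw [Projectivization.mk_eq_mk_iff] at hk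
        obtain ⟨a, ha⟩ := hk
        have hk2 : k = i ∨ k = j := by
          by_contra hc
          push_neg at hc
          have h0 : v k = 0 := apply_eq_zero_of_mem_Lij hc.1 hc.2 hmem
          have := congrFun ha k
          simp [h0, Units.smul_def] at this
        have hmk : Projectivization.mk ℂ v hv =
            Projectivization.mk ℂ (Pi.single k 1) (single_one_ne_zero k) := by
          rw [Projectivization.mk_eq_mk_iff]
          exact ⟨a, ha⟩
        rcases hk2 with rfl | rfl
        · exact Or.inl hmk
        · exact Or.inr hmk
      · rintro (rfl | rfl)
        · exact ⟨⟨Pi.single i 1, single_one_ne_zero i, rfl, single_mem_Lij _ _⟩, i, rfl⟩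
        · exact ⟨⟨Pi.single j 1, single_one_ne_zero j, rfl, single_mem_Lij' _ _⟩, j, rfl⟩
  · -- uniqueness
    intro W hW i j hij hiW hjW
    have hle : Lij i j ≤ W := by
      rw [Lij, Submodule.span_le]
      rintro v (rfl | rfl)
      · exact hiW
      · exact hjW
    exact (Submodule.eq_of_le_of_finrank_le hle (by rw [hW, finrank_Lij hij])).symm
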